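/- Let n be a prime with n ≡ 7 or 31 (mod 36). Suppose z ∈ Z/nZ satisfies z² + 3z + 3 = 0 and the element z/2 (i.e., z times the inverse of 2 mod n) has multiplicative order (n−1)/6. Then U_n is the internal direct product ⟨z+1⟩ × ⟨z/2⟩ × ⟨−1⟩ of cyclic groups of orders 3, (n−1)/6, and 2, with the generators z+1, z/2, −1 in arithmetic progression. -/

import Mathlib

/-- `G` is the internal direct product of the cyclic subgroups generated by `x`, `y`, `z`:
the multiplication map from the product of the three subgroups is a bijection onto `G`. -/
def IsDirectProd3 {G : Type*} [Group G] (x y z : G) : Prop :=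
  Function.Bijective
    (fun p : (Subgroup.zpowers x) × (Subgroup.zpowers y) × (Subgroup.zpowers z) =>
      (p.1 : G) * (p.2.1 : G) * (p.2.2 : G))


theorem stmt7 (n : ℕ) (hn : n.Prime) (hmod : n % 36 = 7 ∨ n % 36 = 31)
    (z : ZMod n) (hroot : z ^ 2 + 3 * z + 3 = 0)
    (hord : orderOf ((2 : ZMod n)⁻¹ * z) = (n - 1) / 6) :
    ∃ u v w : (ZMod n)ˣ,
      (u : ZMod n) = z + 1 ∧ (v : ZMod n) = (2 : ZMod n)⁻¹ * z ∧ (w : ZMod n) = -1 ∧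
      orderOf u = 3 ∧ orderOf v = (n - 1) / 6 ∧ orderOf w = 2 ∧
      IsDirectProd3 u v w ∧
      ((2 : ZMod n)⁻¹ * z) - (z + 1) = (-1 : ZMod n) - (2 : ZMod n)⁻¹ * z := by
  haveI : Fact n.Prime := ⟨hn⟩
  have hn7 : 7 ≤ n := by omega
  haveI : Fact (2 < n) := ⟨by omega⟩
  set m : ℕ := (n - 1) / 6 with hm
  have hm1 : 1 ≤ m := by omega
  have hm2 : m % 2 = 1 := by omega
  have hm3 : m % 3 = 1 ∨ m % 3 = 2 := by omega
  -- 2 ≠ 0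
  have h2 : (2 : ZMod n) ≠ 0 := by
    intro h
    have h2' : ((2 : ℕ) : ZMod n) = 0 := by push_cast; exact h
    rw [ZMod.natCast_eq_zero_iff] at h2'
    have := Nat.le_of_dvd (by norm_num) h2'
    omega
  -- z ≠ 0
  have hz0 : z ≠ 0 := by
    intro h
    rw [h] at hroot
    have h3' : ((3 : ℕ) : ZMod n) = 0 := by push_cast; linear_combination hroot
    rw [ZMod.natCast_eq_zero_iff] at h3'
    have := Nat.le_of_dvd (by norm_num) h3'
    omega
  -- (z+1)^3 = 1
  have hcube : (z + 1) ^ 3 = 1 := by linear_combination z * hroot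
  have hu : IsUnit (z + 1) := by
    refine IsUnit.of_mul_eq_one ((z + 1) ^ 2) ?_
    linear_combination hcube
  have hvord : orderOf ((2 : ZMod n)⁻¹ * z) = m := hord
  have hv : IsUnit ((2 : ZMod n)⁻¹ * z) := by
    refine IsUnit.of_mul_eq_one (((2 : ZMod n)⁻¹ * z) ^ (m - 1)) ?_
    have hp := pow_orderOf_eq_one ((2 : ZMod n)⁻¹ * z)
    rw [hvord] at hp
    calc (2 : ZMod n)⁻¹ * z * ((2 : ZMod n)⁻¹ * z) ^ (m - 1)
        = ((2 : ZMod n)⁻¹ * z) ^ (1 + (m - 1)) := by rw [pow_add, pow_one]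
      _ = 1 := by rw [show 1 + (m - 1) = m by omega]; exact hp
  refine ⟨hu.unit, hv.unit, -1, hu.unit_spec, hv.unit_spec, by simp, ?_⟩
  have huval : (hu.unit : ZMod n) = z + 1 := hu.unit_spec
  have hvval : (hv.unit : ZMod n) = (2 : ZMod n)⁻¹ * z := hv.unit_spec
  have hordu : orderOf hu.unit = 3 := by
    refine orderOf_eq_prime ?_ ?_
    · ext; push_cast [huval]; exact hcube
    · intro h
      have h1 : (hu.unit : ZMod n) = 1 := by rw [h]; simp
      rw [huval] at h1
      exact hz0 (by linear_combination h1)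
  have hordv : orderOf hv.unit = m := by
    rw [← orderOf_units, hvval]; exact hvord
  have hordw : orderOf (-1 : (ZMod n)ˣ) = 2 := by
    refine orderOf_eq_prime (by simp) ?_
    intro h
    have h1 : ((-1 : (ZMod n)ˣ) : ZMod n) = 1 := by rw [h]; simp
    simp only [Units.val_neg, Units.val_one] at h1
    exact ZMod.neg_one_ne_one h1
  refine ⟨hordu, hordv, hordw, ?_, ?_⟩
  · -- direct product
    let φ : (Subgroup.zpowers hu.unit) × (Subgroup.zpowers hv.unit) ×
        (Subgroup.zpowers (-1 : (ZMod n)ˣ)) →* (ZMod n)ˣ :=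
      { toFun := fun p => (p.1 : (ZMod n)ˣ) * (p.2.1 : (ZMod n)ˣ) * (p.2.2 : (ZMod n)ˣ)
        map_one' := by simp
        map_mul' := by
          rintro ⟨a₁, b₁, c₁⟩ ⟨a₂, b₂, c₂⟩
          show (↑(a₁ * a₂) : (ZMod n)ˣ) * ↑(b₁ * b₂) * ↑(c₁ * c₂) = _
          rw [Subgroup.coe_mul, Subgroup.coe_mul, Subgroup.coe_mul,
            mul_mul_mul_comm (a₁ : (ZMod n)ˣ) a₂ b₁ b₂,
            mul_mul_mul_comm ((a₁ : (ZMod n)ˣ) * b₁) ((a₂ : (ZMod n)ˣ) * b₂) c₁ c₂] }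
    have hinj : Function.Injective φ := by
      rw [injective_iff_map_eq_one]
      rintro ⟨a, b, c⟩ habc
      have habc' : (a : (ZMod n)ˣ) * b * c = 1 := habc
      have hda : orderOf (a : (ZMod n)ˣ) ∣ 3 := hordu ▸ orderOf_dvd_of_mem_zpowers a.2
      have hdb : orderOf (b : (ZMod n)ˣ) ∣ m := hordv ▸ orderOf_dvd_of_mem_zpowers b.2
      have hdc : orderOf (c : (ZMod n)ˣ) ∣ 2 := hordw ▸ orderOf_dvd_of_mem_zpowers c.2
      have hc1 : (c : (ZMod n)ˣ) = 1 := by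
        have hcinv : (c : (ZMod n)ˣ) = ((a : (ZMod n)ˣ) * b)⁻¹ := by
          rw [eq_inv_iff_mul_eq_one, mul_comm]; exact habc'
        have hdvd : orderOf (c : (ZMod n)ˣ) ∣ 3 * m := by
          rw [hcinv, orderOf_inv]
          exact ((Commute.all (a : (ZMod n)ˣ) b).orderOf_mul_dvd_mul_orderOf).trans
            (mul_dvd_mul hda hdb)
        rcases (Nat.dvd_prime Nat.prime_two).mp hdc with h | h
        · exact orderOf_eq_one_iff.mp h
        · exfalso; rw [h] at hdvd; omega
      have hb1 : (b : (ZMod n)ˣ) = 1 := by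
        have hab : (a : (ZMod n)ˣ) * b = 1 := by
          rw [hc1, mul_one] at habc'; exact habc'
        have hbinv : (b : (ZMod n)ˣ) = (a : (ZMod n)ˣ)⁻¹ := by
          rw [eq_inv_iff_mul_eq_one, mul_comm]; exact hab
        have h3' : orderOf (b : (ZMod n)ˣ) ∣ 3 := by rw [hbinv, orderOf_inv]; exact hda
        rcases (Nat.dvd_prime Nat.prime_three).mp h3' with h | h
        · exact orderOf_eq_one_iff.mp h
        · exfalso; rw [h] at hdb; omega
      have ha1 : (a : (ZMod n)ˣ) = 1 := by
        rw [hb1, hc1, mul_one, mul_one] at habc'; exact habc'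
      refine Prod.ext ?_ (Prod.ext ?_ ?_) <;> exact Subtype.ext (by assumption)
    have hcard : Nat.card ((Subgroup.zpowers hu.unit) × (Subgroup.zpowers hv.unit) ×
        (Subgroup.zpowers (-1 : (ZMod n)ˣ))) = Nat.card (ZMod n)ˣ := by
      rw [Nat.card_prod, Nat.card_prod, Nat.card_zpowers, Nat.card_zpowers,
        Nat.card_zpowers, hordu, hordv, hordw]
      have hG' : Nat.card (ZMod n)ˣ = n - 1 := by
        rw [Nat.card_eq_fintype_card, ZMod.card_units_eq_totient, Nat.totient_prime hn]
      omega
    exact (Nat.bijective_iff_injective_and_card φ).mpr ⟨hinj, hcard⟩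
  · -- arithmetic progression
    field_simp
    ring
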